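/- arXiv:2408.06549 — 3 statements merged into one kernel-verified Lean document; each statement's English description precedes it below -/
import Mathlib

section
/- Let H = (Fin M → V) where V is a real inner product space, with ‖Θ‖² = Σ_{m} ‖Θ m‖². Let f_1, …, f_N : H → ℝ be differentiable, let η > 0, and suppose for every client n and every m, Θ, Θ': ‖∇_m f_n(Θ) − ∇_m f_n(Θ')‖ ≤ L‖Θ − Θ'‖ and ‖∇_m f_n(Θ)‖ ≤ δ. Fix subsets C_1, …, C_E ⊆ Fin M and a common initial point Θ^r. For each client n define masked iterates Θ_n^e with (Θ_n^e) m = (Θ_n^{e−1}) m − η·(∇_m f_n(Θ_n^{e−1}) if m ∈ C_e, else 0) and full iterates Θ̂_n^e = Θ̂_n^{e−1} − η·∇f_n(Θ̂_n^{e−1}), both started from Θ^r. Let Θ^{r+1} = (1/N) Σ_n Θ_n^E and Θ̂^{r+1} = (1/N) Σ_n Θ̂_n^E. Then ‖Θ^{r+1} − Θ̂^{r+1}‖² ≤ 2η² Σ_{e=1}^{E} ( ∏_{j=e+1}^{E} (2 + 2η²L²·|C_j|) ) · (M − |C_e|) · δ². -/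
/-- `PiLp` of complete spaces is complete (the uniformity is definitionally the
product uniformity). -/
instance PiLp.instCompleteSpace' {ι : Type*} [Fintype ι] {V : ι → Type*}
    [∀ i, NormedAddCommGroup (V i)] [∀ i, CompleteSpace (V i)] {p : ENNReal}
    [Fact (1 ≤ p)] : CompleteSpace (PiLp p V) :=
  inferInstance

/-- **Theorem 1 (averaged form)**: `N` clients run `E` local updates from a common global
model `Θʳ`; at step `e` each client trains only the modality blocks in the combination
`C e`, while the ideal iterates train all `M` blocks. The squared deviation between the
averaged masked model and the averaged full model satisfies
`‖Θ^{r+1} − Θ̂^{r+1}‖² ≤ 2η² Σ_{e=1}^{E} (Π_{j=e+1}^{E} (2 + 2η²L²|C_j|)) (M − |C_e|) δ²`. -/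
theorem theorem1_averaged
    {V : Type*} [NormedAddCommGroup V] [InnerProductSpace ℝ V] [CompleteSpace V]
    {M N : ℕ} (hN : 0 < N) (L δ η : ℝ) (hη : 0 < η)
    (f : Fin N → PiLp 2 (fun _ : Fin M => V) → ℝ)
    (hf : ∀ n : Fin N, Differentiable ℝ (f n))
    (hL : ∀ (n : Fin N) (m : Fin M) (Θ Θ' : PiLp 2 (fun _ : Fin M => V)),
      ‖gradient (f n) Θ m - gradient (f n) Θ' m‖ ≤ L * ‖Θ - Θ'‖)
    (hδ : ∀ (n : Fin N) (m : Fin M) (Θ : PiLp 2 (fun _ : Fin M => V)),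
      ‖gradient (f n) Θ m‖ ≤ δ)
    (E : ℕ) (C : ℕ → Finset (Fin M))
    (Θr : PiLp 2 (fun _ : Fin M => V))
    (Θ Θhat : Fin N → ℕ → PiLp 2 (fun _ : Fin M => V))
    (h0 : ∀ n : Fin N, Θ n 0 = Θr)
    (hhat0 : ∀ n : Fin N, Θhat n 0 = Θr)
    (hmask : ∀ n : Fin N, ∀ e < E, ∀ m : Fin M,
      Θ n (e + 1) m =
        Θ n e m - η • (if m ∈ C (e + 1) then gradient (f n) (Θ n e) m else 0))
    (hfull : ∀ n : Fin N, ∀ e < E,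
      Θhat n (e + 1) = Θhat n e - η • gradient (f n) (Θhat n e)) :
    ‖(N : ℝ)⁻¹ • ∑ n : Fin N, Θ n E - (N : ℝ)⁻¹ • ∑ n : Fin N, Θhat n E‖ ^ 2 ≤
      2 * η ^ 2 * ∑ e ∈ Finset.Icc 1 E,
        (∏ j ∈ Finset.Icc (e + 1) E, (2 + 2 * η ^ 2 * L ^ 2 * ((C j).card : ℝ)))
          * ((M : ℝ) - ((C e).card : ℝ)) * δ ^ 2 := by
  classical
  set A : ℕ → ℝ := fun j => 2 + 2 * η ^ 2 * L ^ 2 * ((C j).card : ℝ) with hAdef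
  set S : ℕ → ℝ := fun e => 2 * η ^ 2 * ∑ i ∈ Finset.Icc 1 e,
      (∏ j ∈ Finset.Icc (i + 1) e, A j) * ((M : ℝ) - ((C i).card : ℝ)) * δ ^ 2 with hSdef
  have hA : ∀ j, 0 ≤ A j := by
    intro j; simp only [hAdef]; positivity
  have hcard : ∀ j, ((C j).card : ℝ) ≤ (M : ℝ) := by
    intro j
    exact_mod_cast (Finset.card_le_univ (C j)).trans_eq (Fintype.card_fin M)
  have hS : ∀ e, 0 ≤ S e := by
    intro e
    simp only [hSdef]
    apply mul_nonneg (mul_nonneg (by norm_num) (sq_nonneg η))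
    apply Finset.sum_nonneg
    intro i _
    have h1 : (0:ℝ) ≤ ∏ j ∈ Finset.Icc (i + 1) e, A j :=
      Finset.prod_nonneg fun j _ => hA j
    have h2 : (0:ℝ) ≤ (M : ℝ) - ((C i).card : ℝ) := by linarith [hcard i]
    exact mul_nonneg (mul_nonneg h1 h2) (sq_nonneg δ)
  have hSrec : ∀ e, S (e + 1) =
      A (e + 1) * S e + 2 * η ^ 2 * (((M : ℝ) - ((C (e + 1)).card : ℝ)) * δ ^ 2) := by
    intro e
    simp only [hSdef]
    rw [Finset.sum_Icc_succ_top (by omega : 1 ≤ e + 1)]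
    have hcng : ∀ i ∈ Finset.Icc 1 e,
        (∏ j ∈ Finset.Icc (i + 1) (e + 1), A j) * ((M : ℝ) - ((C i).card : ℝ)) * δ ^ 2
          = A (e + 1) *
            ((∏ j ∈ Finset.Icc (i + 1) e, A j) * ((M : ℝ) - ((C i).card : ℝ)) * δ ^ 2) := by
      intro i hi
      have hie : i ≤ e := (Finset.mem_Icc.mp hi).2
      rw [Finset.prod_Icc_succ_top (by omega : i + 1 ≤ e + 1)]
      ring
    rw [Finset.sum_congr rfl hcng, ← Finset.mul_sum,
      show Finset.Icc (e + 1 + 1) (e + 1) = ∅ from Finset.Icc_eq_empty (by omega),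
      Finset.prod_empty]
    ring
  have key : ∀ (n : Fin N) (e : ℕ), e ≤ E → ‖Θ n e - Θhat n e‖ ^ 2 ≤ S e := by
    intro n e
    induction e with
    | zero =>
        intro _
        rw [h0 n, hhat0 n, sub_self, norm_zero]
        simp [hSdef, show Finset.Icc 1 0 = ∅ from Finset.Icc_eq_empty (by omega)]
    | succ e ih =>
        intro he1
        have he : e < E := he1
        have ihe := ih he.le
        have hblock : ∀ m : Fin M, ‖(Θ n (e + 1) - Θhat n (e + 1)) m‖ ^ 2 ≤
            2 * ‖(Θ n e - Θhat n e) m‖ ^ 2 +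
              (if m ∈ C (e + 1) then 2 * η ^ 2 * L ^ 2 * ‖Θ n e - Θhat n e‖ ^ 2
                else 2 * η ^ 2 * δ ^ 2) := by
          intro m
          have hhatm : Θhat n (e + 1) m = Θhat n e m - η • gradient (f n) (Θhat n e) m := by
            rw [hfull n e he]; rfl
          have hm := hmask n e he m
          rw [PiLp.sub_apply, PiLp.sub_apply]
          by_cases hc : m ∈ C (e + 1)
          · rw [if_pos hc] at hm
            rw [if_pos hc]
            have heq : Θ n (e + 1) m - Θhat n (e + 1) m =
                (Θ n e m - Θhat n e m) -
                  η • (gradient (f n) (Θ n e) m - gradient (f n) (Θhat n e) m) := by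
              rw [hm, hhatm, smul_sub]; abel
            rw [heq]
            have h1 := norm_sub_le (Θ n e m - Θhat n e m)
              (η • (gradient (f n) (Θ n e) m - gradient (f n) (Θhat n e) m))
            have h2 : ‖η • (gradient (f n) (Θ n e) m - gradient (f n) (Θhat n e) m)‖ =
                η * ‖gradient (f n) (Θ n e) m - gradient (f n) (Θhat n e) m‖ := by
              rw [norm_smul, Real.norm_eq_abs, abs_of_pos hη]
            have h3 := hL n m (Θ n e) (Θhat n e)
            have h4 := norm_nonneg (Θ n e m - Θhat n e m)
            have h5 := norm_nonneg (gradient (f n) (Θ n e) m - gradient (f n) (Θhat n e) m)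
            have h6 := norm_nonneg (Θ n e m - Θhat n e m -
              η • (gradient (f n) (Θ n e) m - gradient (f n) (Θhat n e) m))
            nlinarith [sq_nonneg (‖Θ n e m - Θhat n e m‖ -
              η * ‖gradient (f n) (Θ n e) m - gradient (f n) (Θhat n e) m‖),
              mul_le_mul h3 h3 h5 (h5.trans h3), hη.le, sq_nonneg η]
          · rw [if_neg hc] at hm
            rw [if_neg hc]
            have heq : Θ n (e + 1) m - Θhat n (e + 1) m =
                (Θ n e m - Θhat n e m) + η • gradient (f n) (Θhat n e) m := by
              rw [hm, hhatm, smul_zero, sub_zero]; abel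
            rw [heq]
            have h1 := norm_add_le (Θ n e m - Θhat n e m) (η • gradient (f n) (Θhat n e) m)
            have h2 : ‖η • gradient (f n) (Θhat n e) m‖ =
                η * ‖gradient (f n) (Θhat n e) m‖ := by
              rw [norm_smul, Real.norm_eq_abs, abs_of_pos hη]
            have h3 := hδ n m (Θhat n e)
            have h4 := norm_nonneg (Θ n e m - Θhat n e m)
            have h5 := norm_nonneg (gradient (f n) (Θhat n e) m)
            have h6 := norm_nonneg (Θ n e m - Θhat n e m + η • gradient (f n) (Θhat n e) m)
            nlinarith [sq_nonneg (‖Θ n e m - Θhat n e m‖ -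
              η * ‖gradient (f n) (Θhat n e) m‖), hη.le, sq_nonneg η,
              mul_le_mul h3 h3 h5 (h5.trans h3), mul_le_mul h1 h1 h6 (h6.trans h1)]
        have hsum : ‖Θ n (e + 1) - Θhat n (e + 1)‖ ^ 2 ≤
            A (e + 1) * ‖Θ n e - Θhat n e‖ ^ 2 +
              2 * η ^ 2 * (((M : ℝ) - ((C (e + 1)).card : ℝ)) * δ ^ 2) := by
          rw [PiLp.norm_sq_eq_of_L2]
          calc ∑ m, ‖(Θ n (e + 1) - Θhat n (e + 1)) m‖ ^ 2
              ≤ ∑ m : Fin M, (2 * ‖(Θ n e - Θhat n e) m‖ ^ 2 +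
                  (if m ∈ C (e + 1) then 2 * η ^ 2 * L ^ 2 * ‖Θ n e - Θhat n e‖ ^ 2
                    else 2 * η ^ 2 * δ ^ 2)) :=
                Finset.sum_le_sum fun m _ => hblock m
            _ = A (e + 1) * ‖Θ n e - Θhat n e‖ ^ 2 +
                  2 * η ^ 2 * (((M : ℝ) - ((C (e + 1)).card : ℝ)) * δ ^ 2) := by
                rw [Finset.sum_add_distrib, ← Finset.mul_sum,
                  ← PiLp.norm_sq_eq_of_L2 (fun _ : Fin M => V) (Θ n e - Θhat n e)]
                have hite : ∀ m : Fin M,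
                    (if m ∈ C (e + 1) then 2 * η ^ 2 * L ^ 2 * ‖Θ n e - Θhat n e‖ ^ 2
                      else 2 * η ^ 2 * δ ^ 2) =
                    (if m ∈ C (e + 1)
                      then 2 * η ^ 2 * L ^ 2 * ‖Θ n e - Θhat n e‖ ^ 2 - 2 * η ^ 2 * δ ^ 2
                      else 0) + 2 * η ^ 2 * δ ^ 2 := by
                  intro m; by_cases hc : m ∈ C (e + 1) <;> simp [hc]
                rw [Finset.sum_congr rfl fun m _ => hite m, Finset.sum_add_distrib,
                  Finset.sum_ite_mem, Finset.univ_inter, Finset.sum_const,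
                  Finset.sum_const, Finset.card_univ, Fintype.card_fin, nsmul_eq_mul,
                  nsmul_eq_mul]
                simp only [hAdef]
                ring
        calc ‖Θ n (e + 1) - Θhat n (e + 1)‖ ^ 2
            ≤ A (e + 1) * ‖Θ n e - Θhat n e‖ ^ 2 +
                2 * η ^ 2 * (((M : ℝ) - ((C (e + 1)).card : ℝ)) * δ ^ 2) := hsum
          _ ≤ A (e + 1) * S e +
                2 * η ^ 2 * (((M : ℝ) - ((C (e + 1)).card : ℝ)) * δ ^ 2) := by
              have := mul_le_mul_of_nonneg_left ihe (hA (e + 1)); linarith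
          _ = S (e + 1) := (hSrec e).symm
  -- averaging
  have havg : (N : ℝ)⁻¹ • ∑ n : Fin N, Θ n E - (N : ℝ)⁻¹ • ∑ n : Fin N, Θhat n E =
      (N : ℝ)⁻¹ • ∑ n : Fin N, (Θ n E - Θhat n E) := by
    rw [Finset.sum_sub_distrib, smul_sub]
  have hnorm : ‖(N : ℝ)⁻¹ • ∑ n : Fin N, Θ n E - (N : ℝ)⁻¹ • ∑ n : Fin N, Θhat n E‖ ≤
      Real.sqrt (S E) := by
    rw [havg, norm_smul, Real.norm_eq_abs, abs_of_nonneg (inv_nonneg.mpr (Nat.cast_nonneg N))]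
    have h1 : ‖∑ n : Fin N, (Θ n E - Θhat n E)‖ ≤ (N : ℝ) * Real.sqrt (S E) := by
      calc ‖∑ n : Fin N, (Θ n E - Θhat n E)‖ ≤ ∑ n : Fin N, ‖Θ n E - Θhat n E‖ :=
            norm_sum_le _ _
        _ ≤ ∑ _n : Fin N, Real.sqrt (S E) := by
            apply Finset.sum_le_sum
            intro n _
            rw [← Real.sqrt_sq (norm_nonneg (Θ n E - Θhat n E))]
            exact Real.sqrt_le_sqrt (key n E le_rfl)
        _ = (N : ℝ) * Real.sqrt (S E) := by
            rw [Finset.sum_const, Finset.card_univ, Fintype.card_fin, nsmul_eq_mul]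
    calc (N : ℝ)⁻¹ * ‖∑ n : Fin N, (Θ n E - Θhat n E)‖
        ≤ (N : ℝ)⁻¹ * ((N : ℝ) * Real.sqrt (S E)) := by
          apply mul_le_mul_of_nonneg_left h1 (inv_nonneg.mpr (Nat.cast_nonneg N))
      _ = Real.sqrt (S E) := by
          field_simp
  have hfin : ‖(N : ℝ)⁻¹ • ∑ n : Fin N, Θ n E - (N : ℝ)⁻¹ • ∑ n : Fin N, Θhat n E‖ ^ 2 ≤
      S E := by
    calc ‖(N : ℝ)⁻¹ • ∑ n : Fin N, Θ n E - (N : ℝ)⁻¹ • ∑ n : Fin N, Θhat n E‖ ^ 2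
        ≤ Real.sqrt (S E) ^ 2 := by
          apply pow_le_pow_left₀ (norm_nonneg _) hnorm
      _ = S E := Real.sq_sqrt (hS E)
  exact hfin
end

section
/- Let H = (Fin M → V) where V is a real inner product space, with ‖Θ‖² = Σ_{m} ‖Θ m‖². Let f : H → ℝ be differentiable, η > 0, and suppose for all m, Θ, Θ': ‖∇_m f(Θ) − ∇_m f(Θ')‖ ≤ L‖Θ − Θ'‖ and ‖∇_m f(Θ)‖ ≤ δ. Then for any x, y ∈ H and any C ⊆ Fin M, letting x⁺ be the masked update of x ((x⁺) m = x m − η·(∇_m f(x) if m ∈ C, else 0)) and y⁺ = y − η·∇f(y) the full update of y, we have ‖x⁺ − y⁺‖² ≤ (2 + 2η²L²·|C|)·‖x − y‖² + 2η²·(M − |C|)·δ². -/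
lemma sq_norm_sub_le {V : Type*} [NormedAddCommGroup V] (a b : V) :
    ‖a - b‖ ^ 2 ≤ 2 * ‖a‖ ^ 2 + 2 * ‖b‖ ^ 2 := by
  have h := norm_sub_le a b
  nlinarith [norm_nonneg a, norm_nonneg b, norm_nonneg (a - b), sq_nonneg (‖a‖ - ‖b‖)]

/-- **One-step recursion (Eq. (23)) of Theorem 1's proof**: if `x⁺` is the masked update
of `x` (only the modality blocks in `C` are trained) and `y⁺` the full-gradient update
of `y`, then
`‖x⁺ − y⁺‖² ≤ (2 + 2η²L²|C|)·‖x − y‖² + 2η²(M − |C|)δ²`. -/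
theorem theorem1_one_step_recursion
    {V : Type*} [NormedAddCommGroup V] [InnerProductSpace ℝ V] [CompleteSpace V]
    {M : ℕ} (L δ η : ℝ) (hη : 0 < η)
    (f : PiLp 2 (fun _ : Fin M => V) → ℝ)
    (hf : Differentiable ℝ f)
    (hL : ∀ (m : Fin M) (Θ Θ' : PiLp 2 (fun _ : Fin M => V)),
      ‖gradient f Θ m - gradient f Θ' m‖ ≤ L * ‖Θ - Θ'‖)
    (hδ : ∀ (m : Fin M) (Θ : PiLp 2 (fun _ : Fin M => V)),
      ‖gradient f Θ m‖ ≤ δ)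
    (C : Finset (Fin M))
    (x y xp yp : PiLp 2 (fun _ : Fin M => V))
    (hxp : ∀ m : Fin M,
      xp m = x m - η • (if m ∈ C then gradient f x m else 0))
    (hyp : yp = y - η • gradient f y) :
    ‖xp - yp‖ ^ 2 ≤
      (2 + 2 * η ^ 2 * L ^ 2 * (C.card : ℝ)) * ‖x - y‖ ^ 2
        + 2 * η ^ 2 * ((M : ℝ) - (C.card : ℝ)) * δ ^ 2 := by
  have hcard : (C.card : ℝ) ≤ (M : ℝ) := by
    exact_mod_cast Finset.card_le_card (Finset.subset_univ C) |>.trans_eq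
      (by simp [Finset.card_univ])
  have key : ∀ m : Fin M, ‖(xp - yp) m‖ ^ 2 ≤
      2 * ‖(x - y) m‖ ^ 2 +
        (if m ∈ C then 2 * η ^ 2 * L ^ 2 * ‖x - y‖ ^ 2 else 2 * η ^ 2 * δ ^ 2) := by
    intro m
    have happ : (xp - yp) m = xp m - yp m := rfl
    have hxy : (x - y) m = x m - y m := rfl
    by_cases hm : m ∈ C
    · simp only [hm, if_true]
      have heq : (xp - yp) m =
          (x m - y m) - η • (gradient f x m - gradient f y m) := by
        rw [happ, hxp m, hyp, if_pos hm]
        simp only [PiLp.sub_apply, PiLp.smul_apply]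
        abel_nf
        module
      rw [heq]
      have h1 := sq_norm_sub_le (x m - y m) (η • (gradient f x m - gradient f y m))
      have h2 : ‖η • (gradient f x m - gradient f y m)‖ = η * ‖gradient f x m - gradient f y m‖ := by
        rw [norm_smul, Real.norm_eq_abs, abs_of_pos hη]
      have h3 := hL m x y
      have h4 : (0:ℝ) ≤ ‖gradient f x m - gradient f y m‖ := norm_nonneg _
      have h5 : ‖gradient f x m - gradient f y m‖ ^ 2 ≤ (L * ‖x - y‖) ^ 2 :=
        pow_le_pow_left₀ h4 h3 2
      rw [h2] at h1
      rw [hxy]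
      nlinarith [sq_nonneg η]
    · simp only [hm, if_false]
      have heq : (xp - yp) m = (x m - y m) - (- η • gradient f y m) := by
        rw [happ, hxp m, hyp, if_neg hm]
        simp only [PiLp.sub_apply, PiLp.smul_apply]
        module
      rw [heq]
      have h1 := sq_norm_sub_le (x m - y m) (-η • gradient f y m)
      have h2 : ‖(-η) • gradient f y m‖ = η * ‖gradient f y m‖ := by
        rw [norm_smul, Real.norm_eq_abs, abs_neg, abs_of_pos hη]
      have h3 := hδ m y
      have h4 : (0:ℝ) ≤ ‖gradient f y m‖ := norm_nonneg _
      have h5 : ‖gradient f y m‖ ^ 2 ≤ δ ^ 2 := pow_le_pow_left₀ h4 h3 2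
      rw [h2] at h1
      rw [hxy]
      nlinarith [sq_nonneg η]
  have hsum : ‖xp - yp‖ ^ 2 = ∑ m, ‖(xp - yp) m‖ ^ 2 := by
    rw [PiLp.norm_sq_eq_of_L2]
  have hxysum : ‖x - y‖ ^ 2 = ∑ m, ‖(x - y) m‖ ^ 2 := by
    rw [PiLp.norm_sq_eq_of_L2]
  calc ‖xp - yp‖ ^ 2 = ∑ m, ‖(xp - yp) m‖ ^ 2 := hsum
    _ ≤ ∑ m, (2 * ‖(x - y) m‖ ^ 2 +
        (if m ∈ C then 2 * η ^ 2 * L ^ 2 * ‖x - y‖ ^ 2 else 2 * η ^ 2 * δ ^ 2)) :=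
      Finset.sum_le_sum fun m _ => key m
    _ = 2 * ‖x - y‖ ^ 2 + ((C.card : ℝ) * (2 * η ^ 2 * L ^ 2 * ‖x - y‖ ^ 2)
        + ((M : ℝ) - (C.card : ℝ)) * (2 * η ^ 2 * δ ^ 2)) := by
      have hle : C.card ≤ M := by
        simpa using Finset.card_le_univ C
      have hc1 : (Finset.univ.filter (· ∈ C)).card = C.card := by simp
      have hc2 : (Finset.univ.filter (· ∉ C)).card = M - C.card := by
        rw [Finset.filter_not, Finset.card_sdiff_of_subset (Finset.filter_subset _ _), hc1]
        simp
      rw [Finset.sum_add_distrib, ← Finset.mul_sum, ← hxysum, Finset.sum_ite,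
        Finset.sum_const, Finset.sum_const, hc1, hc2]
      simp only [nsmul_eq_mul]
      rw [Nat.cast_sub hle]
    _ ≤ (2 + 2 * η ^ 2 * L ^ 2 * (C.card : ℝ)) * ‖x - y‖ ^ 2
        + 2 * η ^ 2 * ((M : ℝ) - (C.card : ℝ)) * δ ^ 2 := by ring_nf; rfl
end

section
/- Fix real numbers a ≥ 0 and M ≥ 0, an integer E ≥ 1, and real numbers c_1, …, c_E with 0 ≤ c_e ≤ M for all e. Define B(c) = Σ_{e=1}^{E} (M − c_e) · ∏_{j=e+1}^{E} (2 + a·c_j). If c is sorted in descending order (c_1 ≥ c_2 ≥ … ≥ c_E), then for every permutation σ of {1, …, E} we have B(c) ≤ B(c ∘ σ); that is, arranging the values in descending order minimizes B over all rearrangements of the same multiset. -/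
/-- The right-hand side of Theorem 1's bound (up to the positive factor `2η²δ²`):
`B(c) = Σ_{e=1}^{E} (M − c_e) · Π_{j=e+1}^{E} (2 + a·c_j)`, for a cardinality
sequence `c` indexed by `Fin E`. -/
noncomputable def theoremOneBound (a M : ℝ) (E : ℕ) (c : Fin E → ℝ) : ℝ :=
  ∑ e : Fin E, (M - c e) * ∏ j ∈ Finset.univ.filter (fun j : Fin E => e < j), (2 + a * c j)

namespace Cor1

variable {E : ℕ}

/-- The set of inversions of a tuple. -/
noncomputable def inv (d : Fin E → ℝ) : Finset (Fin E × Fin E) :=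
  Finset.univ.filter (fun p => p.1 < p.2 ∧ d p.1 < d p.2)

lemma swap_lt {i j p q : Fin E} (hij : (j : ℕ) = (i : ℕ) + 1) (h : p < q)
    (hne : ¬(p = i ∧ q = j)) : Equiv.swap i j p < Equiv.swap i j q := by
  have hij0 : i < j := by rw [Fin.lt_def]; omega
  rcases eq_or_ne p i with rfl | hpi
  · have hqj : q ≠ j := fun h' => hne ⟨rfl, h'⟩
    have hqi : q ≠ p := ne_of_gt h
    rw [Equiv.swap_apply_left, Equiv.swap_apply_of_ne_of_ne hqi hqj]
    have hq' : (q : ℕ) ≠ (j : ℕ) := fun hh => hqj (Fin.ext hh)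
    rw [Fin.lt_def] at h ⊢
    omega
  rcases eq_or_ne p j with rfl | hpj
  · have hqi : q ≠ i := by
      intro h'
      rw [h', Fin.lt_def] at h
      omega
    have hqj : q ≠ p := ne_of_gt h
    rw [Equiv.swap_apply_right, Equiv.swap_apply_of_ne_of_ne hqi hqj]
    rw [Fin.lt_def] at h ⊢
    omega
  rcases eq_or_ne q i with rfl | hqi
  · rw [Equiv.swap_apply_left, Equiv.swap_apply_of_ne_of_ne hpi hpj]
    exact h.trans hij0
  rcases eq_or_ne q j with rfl | hqj
  · rw [Equiv.swap_apply_right, Equiv.swap_apply_of_ne_of_ne hpi hpj]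
    have hp' : (p : ℕ) ≠ (i : ℕ) := fun hh => hpi (Fin.ext hh)
    rw [Fin.lt_def] at h ⊢
    omega
  · rw [Equiv.swap_apply_of_ne_of_ne hpi hpj, Equiv.swap_apply_of_ne_of_ne hqi hqj]
    exact h

lemma inv_swap_card {d : Fin E → ℝ} {i j : Fin E} (hij : (j : ℕ) = (i : ℕ) + 1)
    (hlt : d i < d j) :
    (inv (d ∘ Equiv.swap i j)).card < (inv d).card := by
  have hij' : i < j := by rw [Fin.lt_def]; omega
  have hmem : (i, j) ∈ inv d := by simp [inv, hij', hlt]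
  have hcard : (inv (d ∘ Equiv.swap i j)).card ≤ ((inv d).erase (i, j)).card := by
    apply Finset.card_le_card_of_injOn
      (fun p => (Equiv.swap i j p.1, Equiv.swap i j p.2))
    · intro p hp
      simp only [Finset.mem_coe, inv, Finset.mem_filter, Finset.mem_univ, true_and,
        Function.comp_apply] at hp
      have hpne : ¬(p.1 = i ∧ p.2 = j) := by
        rintro ⟨h1, h2⟩
        rw [h1, h2] at hp
        rw [Equiv.swap_apply_left, Equiv.swap_apply_right] at hp
        exact absurd hp.2 (not_lt.2 hlt.le)
      have horder := swap_lt hij hp.1 hpne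
      rw [Finset.mem_coe, Finset.mem_erase]
      constructor
      · intro hcontra
        have h1 : Equiv.swap i j p.1 = i := congrArg Prod.fst hcontra
        have h2 : Equiv.swap i j p.2 = j := congrArg Prod.snd hcontra
        have hp1 : p.1 = j := by
          have := congrArg (Equiv.swap i j) h1
          simpa [Equiv.swap_apply_right] using this
        have hp2 : p.2 = i := by
          have := congrArg (Equiv.swap i j) h2
          simpa [Equiv.swap_apply_left] using this
        have hplt := hp.1
        rw [hp1, hp2, Fin.lt_def] at hplt
        omega
      · simp [inv, horder, hp.2]
    · intro p _ q _ hpq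
      have h1 : Equiv.swap i j p.1 = Equiv.swap i j q.1 := congrArg Prod.fst hpq
      have h2 : Equiv.swap i j p.2 = Equiv.swap i j q.2 := congrArg Prod.snd hpq
      exact Prod.ext ((Equiv.swap i j).injective h1) ((Equiv.swap i j).injective h2)
  exact hcard.trans_lt (Finset.card_erase_lt_of_mem hmem)

lemma antitone_of_adj {d : Fin E → ℝ}
    (h : ∀ k : ℕ, ∀ hk : k + 1 < E, d ⟨k + 1, hk⟩ ≤ d ⟨k, by omega⟩) : Antitone d := by
  intro p q hpq
  rw [Fin.le_def] at hpq
  obtain ⟨n, hn⟩ : ∃ n, (q : ℕ) = (p : ℕ) + n := ⟨q - p, by omega⟩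
  clear hpq
  induction n generalizing q with
  | zero =>
      have : p = q := Fin.ext (by omega)
      rw [this]
  | succ n ih =>
      have hq := q.isLt
      have hk : (p : ℕ) + n + 1 < E := by omega
      have hqe : q = ⟨(p : ℕ) + n + 1, hk⟩ := Fin.ext (by simp only [Fin.val_mk]; omega)
      subst hqe
      have h1 : d ⟨(p : ℕ) + n + 1, hk⟩ ≤ d ⟨(p : ℕ) + n, by omega⟩ := h ((p : ℕ) + n) hk
      exact h1.trans (@ih ⟨(p : ℕ) + n, by omega⟩ rfl)

lemma inv_eq_empty {d : Fin E → ℝ} (h : Antitone d) : inv d = ∅ := by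
  ext p
  simp only [inv, Finset.mem_filter, Finset.mem_univ, true_and, Finset.notMem_empty,
    iff_false, not_and]
  intro h1
  exact not_lt.2 (h h1.le)

lemma antitone_rearrangement_eq {c : Fin E → ℝ} (hc : Antitone c) (τ : Equiv.Perm (Fin E))
    (hτ : Antitone (c ∘ τ)) : c ∘ τ = c := by
  have hrev : Antitone (Fin.rev : Fin E → Fin E) := fun x y hxy => Fin.rev_le_rev.2 hxy
  have h1 : Monotone (c ∘ ⇑((Fin.revPerm : Equiv.Perm (Fin E)).trans τ)) := by
    intro x y hxy
    exact hτ (hrev hxy)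
  have h2 : Monotone (c ∘ ⇑(Fin.revPerm : Equiv.Perm (Fin E))) := by
    intro x y hxy
    exact hc (hrev hxy)
  have e3 : c ∘ ⇑((Fin.revPerm : Equiv.Perm (Fin E)).trans τ) =
      c ∘ ⇑(Fin.revPerm : Equiv.Perm (Fin E)) :=
    (Tuple.comp_sort_eq_comp_iff_monotone.2 h1).trans
      (Tuple.comp_sort_eq_comp_iff_monotone.2 h2).symm
  funext y
  have h4 := congrFun e3 (Fin.rev y)
  simpa [Fin.rev_rev] using h4

lemma B_swap (a M : ℝ) (ha : 0 ≤ a) (hM : 0 ≤ M) (d : Fin E → ℝ)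
    (hd0 : ∀ e, 0 ≤ d e) {i j : Fin E} (hij : (j : ℕ) = (i : ℕ) + 1) (hlt : d i ≤ d j) :
    theoremOneBound a M E (d ∘ Equiv.swap i j) ≤ theoremOneBound a M E d := by
  classical
  have hij' : i < j := by rw [Fin.lt_def]; omega
  have hne : i ≠ j := ne_of_lt hij'
  set d' : Fin E → ℝ := d ∘ Equiv.swap i j with hd'
  have hd'i : d' i = d j := by rw [hd']; simp
  have hd'j : d' j = d i := by rw [hd']; simp
  have hd'other : ∀ x, x ≠ i → x ≠ j → d' x = d x := by
    intro x hx1 hx2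
    rw [hd']
    simp [Equiv.swap_apply_of_ne_of_ne hx1 hx2]
  set s : Fin E → Finset (Fin E) :=
    (fun e => Finset.univ.filter (fun x : Fin E => e < x)) with hs
  have hsub : ({i, j} : Finset (Fin E)) ⊆ Finset.univ := Finset.subset_univ _
  have hB : ∀ g : Fin E → ℝ, theoremOneBound a M E g =
      ∑ e ∈ Finset.univ \ {i, j}, (M - g e) * ∏ x ∈ s e, (2 + a * g x) +
      ((M - g i) * ∏ x ∈ s i, (2 + a * g x) + (M - g j) * ∏ x ∈ s j, (2 + a * g x)) := by
    intro g
    have h0 : theoremOneBound a M E g =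
        ∑ e : Fin E, (M - g e) * ∏ x ∈ s e, (2 + a * g x) := rfl
    rw [h0, ← Finset.sum_sdiff hsub, Finset.sum_pair hne]
  rw [hB d, hB d']
  -- products over s j agree
  have hPeq : ∏ x ∈ s j, (2 + a * d' x) = ∏ x ∈ s j, (2 + a * d x) := by
    apply Finset.prod_congr rfl
    intro x hx
    simp only [hs, Finset.mem_filter, Fin.lt_def] at hx
    rw [hd'other x (by simp only [ne_eq, Fin.ext_iff]; omega) (by simp only [ne_eq, Fin.ext_iff]; omega)]
  have hsij : s i = insert j (s j) := by
    ext x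
    simp only [hs, Finset.mem_filter, Finset.mem_univ, true_and, Finset.mem_insert,
      Fin.lt_def, Fin.ext_iff]
    omega
  have hjnot : j ∉ s j := by simp [hs]
  set P : ℝ := ∏ x ∈ s j, (2 + a * d x) with hP
  have hPpos : 0 ≤ P := by
    apply Finset.prod_nonneg
    intro x _
    have := hd0 x
    nlinarith
  have hfi : (M - d i) * ∏ x ∈ s i, (2 + a * d x) =
      (M - d i) * ((2 + a * d j) * P) := by
    rw [hsij, Finset.prod_insert hjnot]
  have hfi' : (M - d' i) * ∏ x ∈ s i, (2 + a * d' x) =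
      (M - d j) * ((2 + a * d i) * P) := by
    rw [hsij, Finset.prod_insert hjnot, hd'i, hd'j, hPeq]
  have hfj' : (M - d' j) * ∏ x ∈ s j, (2 + a * d' x) = (M - d i) * P := by
    rw [hd'j, hPeq]
  -- the main sums agree
  have hsum : ∀ e ∈ Finset.univ \ ({i, j} : Finset (Fin E)),
      (M - d' e) * ∏ x ∈ s e, (2 + a * d' x) =
      (M - d e) * ∏ x ∈ s e, (2 + a * d x) := by
    intro e he
    simp only [Finset.mem_sdiff, Finset.mem_insert, Finset.mem_singleton] at he
    have hei : e ≠ i := fun h => he.2 (Or.inl h)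
    have hej : e ≠ j := fun h => he.2 (Or.inr h)
    rw [hd'other e hei hej]
    congr 1
    rcases lt_or_ge (e : ℕ) (i : ℕ) with hcase | hcase
    · -- e < i : swap permutes s e
      have hrw : ∏ x ∈ s e, (2 + a * d' x) =
          ∏ x ∈ s e, (fun x => 2 + a * d x) (Equiv.swap i j x) := rfl
      rw [hrw]
      apply Equiv.Perm.prod_comp (Equiv.swap i j) (s e) (fun x => 2 + a * d x)
      intro x hx
      simp only [Set.mem_setOf_eq] at hx
      have hxij : x = i ∨ x = j := by
        by_contra hcon
        push_neg at hcon
        exact hx (Equiv.swap_apply_of_ne_of_ne hcon.1 hcon.2)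
      simp only [hs, Finset.coe_filter, Set.mem_setOf_eq, Finset.mem_univ, true_and,
        Fin.lt_def]
      rcases hxij with rfl | rfl
      · omega
      · omega
    · have hje : (j : ℕ) < (e : ℕ) := by
        simp only [ne_eq, Fin.ext_iff] at hei hej
        omega
      apply Finset.prod_congr rfl
      intro x hx
      simp only [hs, Finset.mem_filter, Fin.lt_def] at hx
      rw [hd'other x (by simp only [ne_eq, Fin.ext_iff]; omega) (by simp only [ne_eq, Fin.ext_iff]; omega)]
  rw [Finset.sum_congr rfl hsum, hfi, hfi', hfj']
  have hineq : 0 ≤ (d j - d i) * (1 + a * M) * P :=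
    mul_nonneg (mul_nonneg (sub_nonneg.2 hlt)
      (by nlinarith [mul_nonneg ha hM])) hPpos
  have key : (M - d j) * ((2 + a * d i) * P) + (M - d i) * P ≤
      (M - d i) * ((2 + a * d j) * P) + (M - d j) * P := by
    nlinarith [hineq]
  linarith

lemma key_induction (a M : ℝ) (ha : 0 ≤ a) (hM : 0 ≤ M) (c : Fin E → ℝ)
    (hc0 : ∀ e, 0 ≤ c e) (hsorted : Antitone c) :
    ∀ N : ℕ, ∀ τ : Equiv.Perm (Fin E), (inv (c ∘ τ)).card ≤ N →
      theoremOneBound a M E c ≤ theoremOneBound a M E (c ∘ τ) := by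
  intro N
  induction N with
  | zero =>
      intro τ hτ
      have hempty : inv (c ∘ τ) = ∅ := Finset.card_eq_zero.1 (Nat.le_zero.1 hτ)
      have hanti : Antitone (c ∘ τ) := by
        intro p q hpq
        rcases eq_or_lt_of_le hpq with rfl | hplt
        · exact le_refl _
        by_contra hcon
        push_neg at hcon
        have hmem : (p, q) ∈ inv (c ∘ τ) := by
          simp only [inv, Finset.mem_filter, Finset.mem_univ, true_and]
          exact ⟨hplt, hcon⟩
        rw [hempty] at hmem
        exact absurd hmem (Finset.notMem_empty _)
      rw [antitone_rearrangement_eq hsorted τ hanti]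
  | succ N ih =>
      intro τ hτ
      by_cases hempty : inv (c ∘ τ) = ∅
      · have hanti : Antitone (c ∘ τ) := by
          intro p q hpq
          rcases eq_or_lt_of_le hpq with rfl | hplt
          · exact le_refl _
          by_contra hcon
          push_neg at hcon
          have hmem : (p, q) ∈ inv (c ∘ τ) := by
            simp only [inv, Finset.mem_filter, Finset.mem_univ, true_and]
            exact ⟨hplt, hcon⟩
          rw [hempty] at hmem
          exact absurd hmem (Finset.notMem_empty _)
        rw [antitone_rearrangement_eq hsorted τ hanti]
      · set d := c ∘ τ with hd
        have hadj : ∃ k : ℕ, ∃ hk : k + 1 < E,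
            d ⟨k, by omega⟩ < d ⟨k + 1, hk⟩ := by
          by_contra hcon
          push_neg at hcon
          apply hempty
          apply inv_eq_empty
          apply antitone_of_adj
          intro k hk
          exact hcon k hk
        obtain ⟨k, hk, hkinv⟩ := hadj
        set i : Fin E := ⟨k, by omega⟩ with hi
        set j : Fin E := ⟨k + 1, hk⟩ with hj
        have hij : (j : ℕ) = (i : ℕ) + 1 := rfl
        have hcard := inv_swap_card (d := d) hij hkinv
        have hcomp : c ∘ ⇑(τ * Equiv.swap i j) = d ∘ Equiv.swap i j := by
          funext x
          simp [hd]
        have h1 : theoremOneBound a M E c ≤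
            theoremOneBound a M E (c ∘ ⇑(τ * Equiv.swap i j)) := by
          apply ih
          rw [hcomp]
          omega
        have h2 : theoremOneBound a M E (d ∘ Equiv.swap i j) ≤ theoremOneBound a M E d :=
          B_swap a M ha hM d (fun e => hc0 (τ e)) hij hkinv.le
        calc theoremOneBound a M E c ≤ theoremOneBound a M E (d ∘ Equiv.swap i j) := by
              rw [← hcomp]; exact h1
          _ ≤ theoremOneBound a M E d := h2

end Cor1

/-- **Corollary 1 (abstract form)**: if `c` is sorted in descending order, then for every
permutation `σ` of the indices, `B(c) ≤ B(c ∘ σ)`; i.e., arranging the cardinalities in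
descending order minimizes the Theorem 1 bound over all rearrangements. -/
theorem descending_order_minimizes_bound (a M : ℝ) (ha : 0 ≤ a) (hM : 0 ≤ M)
    (E : ℕ) (hE : 1 ≤ E) (c : Fin E → ℝ)
    (hc : ∀ e : Fin E, 0 ≤ c e ∧ c e ≤ M)
    (hsorted : Antitone c)
    (σ : Equiv.Perm (Fin E)) :
    theoremOneBound a M E c ≤ theoremOneBound a M E (c ∘ σ) := by
  exact Cor1.key_induction a M ha hM c (fun e => (hc e).1) hsorted
    (Cor1.inv (c ∘ σ)).card σ le_rfl
end
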